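/- arXiv:2008.05552 — 2 statements merged into one kernel-verified Lean document; each statement's English description precedes it below -/
import Mathlib

section
/- Let $X$ be a real random variable with support contained in a compact interval $[a,b]$, and let $f:\mathbb{R}\to\mathbb{R}$ be continuously differentiable on $[a,b]$. If $x_1,\ldots,x_N$ are i.i.d. samples of $X$ and $x_{(1)}\le x_{(2)}\le\cdots\le x_{(N)}$ denotes the sorted sample, then $\frac{1}{N-1}\sum_{i=1}^{N-1}\big(f(x_{(i+1)})-f(x_{(i)})\big)^2 \to 0$ almost surely as $N\to\infty$. -/
open MeasureTheory ProbabilityTheory Filter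

/-- The sorted (nondecreasing) list of the first `N` samples `X 0 ω, …, X (N-1) ω`. -/
noncomputable def sortedSample {Ω : Type*} (X : ℕ → Ω → ℝ) (N : ℕ) (ω : Ω) : List ℝ :=
  (List.ofFn fun i : Fin N => X i ω).mergeSort

/-- A `C¹` function on `[a,b]` satisfies a Lipschitz-type bound there. -/
lemma exists_lip_bound {a b : ℝ} {f : ℝ → ℝ} (hab : a ≤ b)
    (hf : ContDiffOn ℝ 1 f (Set.Icc a b)) :
    ∃ C : ℝ, 0 ≤ C ∧ ∀ x ∈ Set.Icc a b, ∀ y ∈ Set.Icc a b, |f y - f x| ≤ C * |y - x| := by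
  rcases eq_or_lt_of_le hab with h | h
  · refine ⟨0, le_rfl, ?_⟩
    intro x hx y hy
    subst h
    rw [Set.Icc_self] at hx hy
    simp_all
  · have hud : UniqueDiffOn ℝ (Set.Icc a b) := uniqueDiffOn_Icc h
    have hcont : ContinuousOn (derivWithin f (Set.Icc a b)) (Set.Icc a b) :=
      hf.continuousOn_derivWithin hud le_rfl
    obtain ⟨C, hC⟩ := (isCompact_Icc).exists_bound_of_continuousOn hcont
    refine ⟨max C 0, le_max_right _ _, ?_⟩
    intro x hx y hy
    have := Convex.norm_image_sub_le_of_norm_derivWithin_le (C := max C 0)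
      (hf.differentiableOn one_ne_zero)
      (fun z hz => le_trans (hC z hz) (le_max_left C 0)) (convex_Icc a b) hx hy
    simpa [Real.norm_eq_abs] using this

/-- Lemma 1: for iid samples of a random variable supported in `[a,b]` and `f`
continuously differentiable on `[a,b]`, the averaged sum of squared increments of `f` along
the sorted sample tends to `0` almost surely. -/
theorem avg_sq_increments_sorted_sample_tendsto_zero {Ω : Type*} {mΩ : MeasurableSpace Ω}
    (P : Measure Ω) [IsProbabilityMeasure P] (X : ℕ → Ω → ℝ) (a b : ℝ) (f : ℝ → ℝ)
    (hab : a ≤ b)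
    (hmeas : ∀ i, Measurable (X i))
    (hindep : iIndepFun X P)
    (hident : ∀ i, IdentDistrib (X i) (X 0) P P)
    (hsupp : ∀ i, ∀ᵐ ω ∂P, X i ω ∈ Set.Icc a b)
    (hf : ContDiffOn ℝ 1 f (Set.Icc a b)) :
    ∀ᵐ ω ∂P, Tendsto
      (fun N : ℕ => (1 / ((N : ℝ) - 1)) *
        ∑ i ∈ Finset.range (N - 1),
          (f ((sortedSample X N ω).getD (i + 1) 0)
            - f ((sortedSample X N ω).getD i 0)) ^ 2)
      atTop (nhds 0) := by
  obtain ⟨C, hC0, hlip⟩ := exists_lip_bound hab hf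
  have hae : ∀ᵐ ω ∂P, ∀ i, X i ω ∈ Set.Icc a b := (ae_all_iff).2 hsupp
  filter_upwards [hae] with ω hX
  set D : ℝ := C ^ 2 * (b - a) * (b - a) with hD
  have hD0 : 0 ≤ D := by
    have : 0 ≤ b - a := sub_nonneg.2 hab
    positivity
  -- properties of the sorted sample
  have hlen : ∀ N, (sortedSample X N ω).length = N := by
    intro N
    simp [sortedSample, List.length_mergeSort]
  have hmem : ∀ N i, i < N → (sortedSample X N ω).getD i 0 ∈ Set.Icc a b := by
    intro N i hi
    have hi' : i < (sortedSample X N ω).length := by rw [hlen]; exact hi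
    rw [List.getD_eq_getElem _ _ hi']
    have hmem' : (sortedSample X N ω)[i] ∈ sortedSample X N ω := List.getElem_mem hi'
    simp only [sortedSample, List.mem_mergeSort, List.mem_ofFn] at hmem'
    obtain ⟨j, hj⟩ := hmem'
    have heq : (sortedSample X N ω)[i] = X j ω := by
      simp only [sortedSample]; exact hj.symm
    rw [heq]
    exact hX j
  have hsorted : ∀ N, (sortedSample X N ω).Pairwise (· ≤ ·) := fun N =>
    List.pairwise_mergeSort' (· ≤ ·) _
  have hmono : ∀ N i, i + 1 < N →
      (sortedSample X N ω).getD i 0 ≤ (sortedSample X N ω).getD (i + 1) 0 := by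
    intro N i hi
    have h1 : i + 1 < (sortedSample X N ω).length := by rw [hlen]; exact hi
    have h0 : i < (sortedSample X N ω).length := lt_trans (Nat.lt_succ_self i) h1
    rw [List.getD_eq_getElem _ _ h0, List.getD_eq_getElem _ _ h1]
    exact (List.pairwise_iff_getElem.1 (hsorted N)) i (i+1) h0 h1 (Nat.lt_succ_self i)
  -- the sum is bounded by D for N ≥ 2
  have hsum : ∀ N, 2 ≤ N →
      (∑ i ∈ Finset.range (N - 1),
          (f ((sortedSample X N ω).getD (i + 1) 0)
            - f ((sortedSample X N ω).getD i 0)) ^ 2) ≤ D := by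
    intro N hN
    set y : ℕ → ℝ := fun i => (sortedSample X N ω).getD i 0 with hy
    have step : ∀ i ∈ Finset.range (N - 1),
        (f (y (i+1)) - f (y i)) ^ 2 ≤ C ^ 2 * (b - a) * (y (i+1) - y i) := by
      intro i hi
      rw [Finset.mem_range] at hi
      have hi1 : i + 1 < N := Nat.add_lt_of_lt_sub hi
      have hi0 : i < N := lt_trans (Nat.lt_succ_self i) hi1
      have hyi := hmem N i hi0
      have hyi1 := hmem N (i+1) hi1
      have hle := hmono N i hi1
      have h1 : |f (y (i+1)) - f (y i)| ≤ C * |y (i+1) - y i| :=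
        hlip _ hyi _ hyi1
      have habs : |y (i+1) - y i| = y (i+1) - y i := abs_of_nonneg (sub_nonneg.2 hle)
      have h2 : (f (y (i+1)) - f (y i)) ^ 2 ≤ (C * (y (i+1) - y i)) ^ 2 := by
        rw [← sq_abs (f (y (i+1)) - f (y i))]
        have hC' : 0 ≤ C * |y (i+1) - y i| := mul_nonneg hC0 (abs_nonneg _)
        calc |f (y (i+1)) - f (y i)| ^ 2 ≤ (C * |y (i+1) - y i|) ^ 2 :=
              pow_le_pow_left₀ (abs_nonneg _) h1 2
          _ = (C * (y (i+1) - y i)) ^ 2 := by rw [habs]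
      have h3 : (C * (y (i+1) - y i)) ^ 2 ≤ C ^ 2 * (b - a) * (y (i+1) - y i) := by
        have hd1 : y (i+1) - y i ≤ b - a := by
          have := hyi1.2
          have := hyi.1
          linarith
        have hd0 : 0 ≤ y (i+1) - y i := sub_nonneg.2 hle
        have : (C * (y (i+1) - y i)) ^ 2 = C ^ 2 * ((y (i+1) - y i) * (y (i+1) - y i)) := by
          ring
        rw [this, mul_assoc]
        refine mul_le_mul_of_nonneg_left ?_ (sq_nonneg C)
        exact mul_le_mul_of_nonneg_right hd1 hd0
      exact le_trans h2 h3
    calc (∑ i ∈ Finset.range (N - 1), (f (y (i+1)) - f (y i)) ^ 2)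
        ≤ ∑ i ∈ Finset.range (N - 1), C ^ 2 * (b - a) * (y (i+1) - y i) :=
          Finset.sum_le_sum step
      _ = C ^ 2 * (b - a) * ∑ i ∈ Finset.range (N - 1), (y (i+1) - y i) := by
          rw [Finset.mul_sum]
      _ = C ^ 2 * (b - a) * (y (N - 1) - y 0) := by rw [Finset.sum_range_sub]
      _ ≤ D := by
          have hN1 : N - 1 < N := Nat.sub_lt (by omega) one_pos
          have h0 : (0 : ℕ) < N := by omega
          have hy1 := hmem N (N - 1) hN1
          have hy0 := hmem N 0 h0
          have hd : y (N - 1) - y 0 ≤ b - a := by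
            have := hy1.2
            have := hy0.1
            linarith
          have hnn : 0 ≤ C ^ 2 * (b - a) := by
            have : 0 ≤ b - a := sub_nonneg.2 hab
            positivity
          calc C ^ 2 * (b - a) * (y (N - 1) - y 0) ≤ C ^ 2 * (b - a) * (b - a) :=
                mul_le_mul_of_nonneg_left hd hnn
            _ = D := rfl
  -- squeeze
  have hnonneg : ∀ N, 0 ≤ ∑ i ∈ Finset.range (N - 1),
      (f ((sortedSample X N ω).getD (i + 1) 0)
        - f ((sortedSample X N ω).getD i 0)) ^ 2 :=
    fun N => Finset.sum_nonneg fun i _ => sq_nonneg _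
  have htop : Tendsto (fun N : ℕ => (N : ℝ) - 1) atTop atTop := by
    simpa [sub_eq_add_neg] using
      (tendsto_natCast_atTop_atTop (R := ℝ)).atTop_add tendsto_const_nhds
  have hupper : Tendsto (fun N : ℕ => D / ((N : ℝ) - 1)) atTop (nhds 0) :=
    Tendsto.div_atTop tendsto_const_nhds htop
  refine tendsto_of_tendsto_of_tendsto_of_le_of_le' tendsto_const_nhds hupper ?_ ?_
  · filter_upwards [eventually_ge_atTop 2] with N hN
    have h1 : (1 : ℝ) ≤ (N : ℝ) - 1 := by
      have : (2 : ℝ) ≤ (N : ℝ) := by exact_mod_cast hN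
      linarith
    exact mul_nonneg (by positivity) (hnonneg N)
  · filter_upwards [eventually_ge_atTop 2] with N hN
    have h1 : (1 : ℝ) ≤ (N : ℝ) - 1 := by
      have : (2 : ℝ) ≤ (N : ℝ) := by exact_mod_cast hN
      linarith
    have hpos : 0 < (N : ℝ) - 1 := lt_of_lt_of_le one_pos h1
    have := hsum N hN
    calc (1 / ((N : ℝ) - 1)) * ∑ i ∈ Finset.range (N - 1),
          (f ((sortedSample X N ω).getD (i + 1) 0)
            - f ((sortedSample X N ω).getD i 0)) ^ 2
        ≤ (1 / ((N : ℝ) - 1)) * D :=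
          mul_le_mul_of_nonneg_left this (by positivity)
      _ = D / ((N : ℝ) - 1) := by ring
end

section
/- Let $X$ and $Y$ be square-integrable real random variables with positive variances, and suppose $\mathbb{E}[Y\mid X] = aX + b$ and $\mathbb{E}[X\mid Y] = cY + d$ almost surely, for constants $a, c \ne 0$ and $b, d \in \mathbb{R}$. Then $\mathrm{Corr}(\mathbb{E}[Y\mid X], Y)^2 = \mathrm{Corr}(\mathbb{E}[X\mid Y], X)^2$, and both equal $\mathrm{Corr}(X,Y)^2$. -/
open MeasureTheory ProbabilityTheory
open scoped ENNReal

noncomputable def cov {Ω : Type*} [MeasurableSpace Ω] (P : Measure Ω) (U V : Ω → ℝ) : ℝ :=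
  ∫ ω, U ω * V ω ∂P - (∫ ω, U ω ∂P) * ∫ ω, V ω ∂P

noncomputable def corr {Ω : Type*} [MeasurableSpace Ω] (P : Measure Ω) (U V : Ω → ℝ) : ℝ :=
  cov P U V / Real.sqrt (variance U P * variance V P)

section Aux

variable {Ω : Type*} [MeasurableSpace Ω] (P : Measure Ω)

lemma variance_ae_congr {U V : Ω → ℝ} (h : U =ᵐ[P] V) : variance U P = variance V P := by
  have hint : ∫ ω, U ω ∂P = ∫ ω, V ω ∂P := integral_congr_ae h
  unfold variance evariance
  rw [hint]
  congr 1
  refine lintegral_congr_ae ?_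
  filter_upwards [h] with ω hω
  rw [hω]

lemma cov_ae_congr {U U' V : Ω → ℝ} (h : U =ᵐ[P] U') : cov P U V = cov P U' V := by
  unfold cov
  rw [integral_congr_ae (g := fun ω => U' ω * V ω) (by filter_upwards [h] with ω hω; rw [hω]),
    integral_congr_ae h]

lemma corr_ae_congr {U U' V : Ω → ℝ} (h : U =ᵐ[P] U') : corr P U V = corr P U' V := by
  unfold corr
  rw [cov_ae_congr P h, variance_ae_congr P h]

lemma cov_symm (U V : Ω → ℝ) : cov P U V = cov P V U := by
  unfold cov
  simp_rw [mul_comm]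

lemma variance_affine [IsProbabilityMeasure P] {X : Ω → ℝ} (hX : Integrable X P) (a b : ℝ) :
    variance (fun ω => a * X ω + b) P = a ^ 2 * variance X P := by
  rw [← variance_const_mul a X P]
  unfold variance evariance
  congr 1
  have hint : ∫ ω, (a * X ω + b) ∂P = a * ∫ ω, X ω ∂P + b := by
    rw [integral_add (hX.const_mul a) (integrable_const b), integral_const_mul, integral_const]
    simp
  have hint2 : ∫ ω, a * X ω ∂P = a * ∫ ω, X ω ∂P := integral_const_mul a X
  refine lintegral_congr fun ω => ?_
  rw [hint, hint2]
  ring_nf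

lemma integrable_mul_of_memL2 [IsProbabilityMeasure P] {X Y : Ω → ℝ}
    (hX : MemLp X 2 P) (hY : MemLp Y 2 P) : Integrable (fun ω => X ω * Y ω) P := by
  rw [← memLp_one_iff_integrable]
  have h : (1 : ℝ≥0∞) / 1 = 1 / 2 + 1 / 2 := by
    rw [ENNReal.div_add_div_same, one_add_one_eq_two, div_one,
      ENNReal.div_self two_ne_zero ENNReal.ofNat_ne_top]
  exact hY.smul (r := 1) hX

lemma cov_affine [IsProbabilityMeasure P] {X Y : Ω → ℝ}
    (hX : MemLp X 2 P) (hY : MemLp Y 2 P) (a b : ℝ) :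
    cov P (fun ω => a * X ω + b) Y = a * cov P X Y := by
  have hXY := integrable_mul_of_memL2 P hX hY
  have hXi := hX.integrable one_le_two
  have hYi := hY.integrable one_le_two
  unfold cov
  have h1 : ∫ ω, (a * X ω + b) * Y ω ∂P = a * ∫ ω, X ω * Y ω ∂P + b * ∫ ω, Y ω ∂P := by
    simp_rw [add_mul, mul_assoc]
    rw [integral_add (hXY.const_mul a) (hYi.const_mul b), integral_const_mul, integral_const_mul]
  have h2 : ∫ ω, (a * X ω + b) ∂P = a * ∫ ω, X ω ∂P + b := by
    rw [integral_add (hXi.const_mul a) (integrable_const b), integral_const_mul, integral_const]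
    simp
  rw [h1, h2]
  ring

lemma corr_sq_eq (U V : Ω → ℝ) :
    corr P U V ^ 2 = cov P U V ^ 2 / (variance U P * variance V P) := by
  rw [corr, div_pow, Real.sq_sqrt (mul_nonneg (variance_nonneg _ _) (variance_nonneg _ _))]

lemma corr_affine_sq [IsProbabilityMeasure P] {X Y : Ω → ℝ}
    (hX : MemLp X 2 P) (hY : MemLp Y 2 P) {a : ℝ} (b : ℝ) (ha : a ≠ 0) :
    corr P (fun ω => a * X ω + b) Y ^ 2 = corr P X Y ^ 2 := by
  rw [corr_sq_eq, corr_sq_eq, cov_affine P hX hY a b,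
    variance_affine P (hX.integrable one_le_two) a b, mul_pow, mul_assoc,
    mul_div_mul_left _ _ (pow_ne_zero 2 ha)]

end Aux

/-- Proposition 1(1): if both conditional expectations are affine, then
`Corr(E[Y|X], Y)² = Corr(E[X|Y], X)² = Corr(X,Y)²`. -/
theorem corr_condexp_sq_symm_of_affine {Ω : Type*} {mΩ : MeasurableSpace Ω}
    (P : Measure Ω) [IsProbabilityMeasure P] (X Y : Ω → ℝ)
    (hXm : Measurable X) (hYm : Measurable Y)
    (hX : MemLp X 2 P) (hY : MemLp Y 2 P)
    (hVX : 0 < variance X P) (hVY : 0 < variance Y P)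
    (a b c d : ℝ) (ha : a ≠ 0) (hc : c ≠ 0)
    (hYX : (P[Y|MeasurableSpace.comap X Real.measurableSpace])
        =ᵐ[P] fun ω => a * X ω + b)
    (hXY : (P[X|MeasurableSpace.comap Y Real.measurableSpace])
        =ᵐ[P] fun ω => c * Y ω + d) :
    corr P (P[Y|MeasurableSpace.comap X Real.measurableSpace]) Y ^ 2
        = corr P (P[X|MeasurableSpace.comap Y Real.measurableSpace]) X ^ 2
      ∧ corr P (P[Y|MeasurableSpace.comap X Real.measurableSpace]) Y ^ 2
        = corr P X Y ^ 2 := by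
  have e1 : corr P (P[Y|MeasurableSpace.comap X Real.measurableSpace]) Y ^ 2
      = corr P X Y ^ 2 := by
    rw [corr_ae_congr P hYX]
    exact corr_affine_sq P hX hY b ha
  have e2 : corr P (P[X|MeasurableSpace.comap Y Real.measurableSpace]) X ^ 2
      = corr P Y X ^ 2 := by
    rw [corr_ae_congr P hXY]
    exact corr_affine_sq P hY hX d hc
  have e3 : corr P Y X ^ 2 = corr P X Y ^ 2 := by
    rw [corr_sq_eq, corr_sq_eq, cov_symm, mul_comm]
  exact ⟨by rw [e1, e2, e3], e1⟩
end
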